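/- Let c_i(r,n,k) be the number of colored permutations π ∈ G_{r,n} with exc_A(π) = k and csum(π) = i. Then c_i(r,n,k) = (n−k)·c_i(r,n−1,k−1) + (k+1)·c_i(r,n−1,k) + Σ_{j=1}^{r−1} [(n−k)·c_{i−j}(r,n−1,k) + (k+1)·c_{i−j}(r,n−1,k+1)], with c_{−m}(r,n,k) = 0 for m ≥ 1 and c_i(r,0,k) = 0. -/

import Mathlib

open Finset Polynomial

/-- The group of colored permutations `G_{r,n} = Z_r ≀ S_n`, realized as bijections of the
colored alphabet `Σ = [n] × {0,…,r-1}` commuting with the color shift. -/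
def ColoredPerm (r n : ℕ) [NeZero r] : Type :=
  {π : Equiv.Perm (Fin n × Fin r) //
    ∀ x : Fin n × Fin r, π (x.1, x.2 + 1) = ((π x).1, (π x).2 + 1)}

/-- The color order on the colored alphabet:
`1^[r-1] < ⋯ < n^[r-1] < ⋯ < 1^[0] < ⋯ < n^[0]` (higher color is smaller). -/
def colorLt {r n : ℕ} (x y : Fin n × Fin r) : Prop :=
  y.2 < x.2 ∨ (x.2 = y.2 ∧ x.1 < y.1)

/-- The excedance number `exc` of a colored permutation. -/
noncomputable def cExc {r n : ℕ} [NeZero r] (π : ColoredPerm r n) : ℕ :=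
  Nat.card {x : Fin n × Fin r // colorLt x (π.1 x)}

/-- `exc_A(π) = |{i ∈ [n-1] : π(i) > i}|` (positions are the color-0 letters,
and `i ∈ [n-1]` corresponds to `i.val + 1 < n`). -/
noncomputable def cExcA {r n : ℕ} [NeZero r] (π : ColoredPerm r n) : ℕ :=
  Nat.card {i : Fin n // i.val + 1 < n ∧ colorLt (i, 0) (π.1 (i, 0))}

/-- `csum(π)`: the sum of the colors appearing in the window notation of `π`. -/
def csum {r n : ℕ} [NeZero r] (π : ColoredPerm r n) : ℕ :=
  ∑ i : Fin n, (π.1 (i, 0)).2.val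

/-- `c_i(r,n,k)`: the number of colored permutations `π ∈ G_{r,n}` with `exc_A(π) = k` and
`csum(π) = i`.  Indices `i, k` range over `ℤ`, so counts vanish for negative indices
(in particular `c_{−m}(r,n,k) = 0` for `m ≥ 1`). -/
noncomputable def cG (r n : ℕ) [NeZero r] (i k : ℤ) : ℕ :=
  Nat.card {π : ColoredPerm r n // (cExcA π : ℤ) = k ∧ (csum π : ℤ) = i}

section Aux
variable {r : ℕ} [NeZero r]

/-- excedance statistic on a pair (coloring, permutation) -/
def pExc {n : ℕ} (x : (Fin n → Fin r) × Equiv.Perm (Fin n)) : ℕ :=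
  (Finset.univ.filter fun q : Fin n => x.1 q = 0 ∧ q.val < (x.2 q).val).card

/-- color sum statistic on a pair -/
def pSum {n : ℕ} (x : (Fin n → Fin r) × Equiv.Perm (Fin n)) : ℕ :=
  ∑ q, (x.1 q).val

def fromPair {n : ℕ} (x : (Fin n → Fin r) × Equiv.Perm (Fin n)) : ColoredPerm r n :=
  ⟨{ toFun := fun a => (x.2 a.1, a.2 + x.1 a.1)
     invFun := fun a => (x.2.symm a.1, a.2 - x.1 (x.2.symm a.1))
     left_inv := by intro a; simp
     right_inv := by intro a; simp },
   by intro a; simp [add_right_comm]⟩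

lemma fromPair_apply {n : ℕ} (x : (Fin n → Fin r) × Equiv.Perm (Fin n)) (a : Fin n × Fin r) :
    (fromPair x).1 a = (x.2 a.1, a.2 + x.1 a.1) := rfl

lemma fromPair_injective {n : ℕ} :
    Function.Injective (fromPair (r := r) (n := n)) := by
  intro x y h
  have h' : ∀ a, (fromPair x).1 a = (fromPair y).1 a := by
    intro a; rw [h]
  have h0 : ∀ q : Fin n, (x.2 q, x.1 q) = (y.2 q, y.1 q) := by
    intro q
    have := h' (q, 0)
    simpa [fromPair_apply] using this
  have hc : x.1 = y.1 := funext fun q => (Prod.mk.injEq _ _ _ _ ▸ (h0 q)).2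
  have hσ : x.2 = y.2 := Equiv.ext fun q => (Prod.mk.injEq _ _ _ _ ▸ (h0 q)).1
  exact Prod.ext_iff.mpr ⟨hc, hσ⟩

open Fin.NatCast in
lemma fromPair_surjective {n : ℕ} :
    Function.Surjective (fromPair (r := r) (n := n)) := by
  intro π
  set c : Fin n → Fin r := fun q => (π.1 (q, 0)).2 with hc
  set σ₀ : Fin n → Fin n := fun q => (π.1 (q, 0)).1 with hσ₀
  have key : ∀ (q : Fin n) (t : ℕ), π.1 (q, (t : Fin r)) = (σ₀ q, (t : Fin r) + c q) := by
    intro q t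
    induction t with
    | zero => simp [hσ₀, hc]
    | succ t ih =>
      have : ((t + 1 : ℕ) : Fin r) = (t : ℕ) + 1 := by push_cast; ring
      rw [this]
      have := π.2 (q, (t : Fin r))
      simp only at this
      rw [this, ih]
      simp [add_right_comm]
  have key' : ∀ a : Fin n × Fin r, π.1 a = (σ₀ a.1, a.2 + c a.1) := by
    intro ⟨q, t⟩
    have := key q t.val
    simpa [Fin.cast_val_eq_self] using this
  have hinj : Function.Injective σ₀ := by
    intro a b hab
    have h1 : π.1 (a, (0:Fin r)) = (σ₀ a, c a) := by simpa using key' (a, 0)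
    have h2 : π.1 (b, c a - c b) = (σ₀ a, c a) := by
      rw [key' (b, c a - c b), hab]; simp
    have := π.1.injective (h1.trans h2.symm)
    exact (Prod.mk.injEq _ _ _ _ ▸ this).1
  refine ⟨(c, Equiv.ofBijective σ₀ (Finite.injective_iff_bijective.mp hinj)), ?_⟩
  apply Subtype.ext
  apply Equiv.ext
  intro a
  rw [key' a]
  rfl

lemma cExcA_fromPair {n : ℕ} (x : (Fin n → Fin r) × Equiv.Perm (Fin n)) :
    cExcA (fromPair x) = pExc x := by
  unfold cExcA pExc
  have h : ∀ q : Fin n,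
      (q.val + 1 < n ∧ colorLt (q, 0) ((fromPair x).1 (q, 0))) ↔
        (x.1 q = 0 ∧ q.val < (x.2 q).val) := by
    intro q
    rw [fromPair_apply]
    simp only [colorLt, zero_add]
    constructor
    · rintro ⟨-, h⟩
      rcases h with h | ⟨h1, h2⟩
      · exact absurd h (by simp [Fin.lt_def])
      · exact ⟨h1.symm, Fin.lt_def.mp h2⟩
    · rintro ⟨h1, h2⟩
      have := (x.2 q).isLt
      exact ⟨by omega, Or.inr ⟨h1.symm, Fin.lt_def.mpr h2⟩⟩
  rw [Nat.card_congr (Equiv.subtypeEquivRight h), Nat.card_eq_fintype_card,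
    Fintype.card_subtype]

lemma csum_fromPair {n : ℕ} (x : (Fin n → Fin r) × Equiv.Perm (Fin n)) :
    csum (fromPair x) = pSum x := by
  unfold csum pSum
  refine Finset.sum_congr rfl fun q _ => ?_
  rw [fromPair_apply]
  simp

lemma cG_eq_card {n : ℕ} (i k : ℤ) :
    cG r n i k = (Finset.univ.filter
      (fun x : (Fin n → Fin r) × Equiv.Perm (Fin n) =>
        (pExc x : ℤ) = k ∧ (pSum x : ℤ) = i)).card := by
  unfold cG
  rw [Nat.card_congr (((Equiv.ofBijective fromPair
      (show Function.Bijective fromPair from ⟨fromPair_injective, fromPair_surjective⟩)).subtypeEquiv (fun x => by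
    rw [Equiv.ofBijective_apply, cExcA_fromPair, csum_fromPair])).symm)]
  rw [Nat.card_eq_fintype_card, Fintype.card_subtype]

end Aux

section Aux2
variable {r : ℕ} [NeZero r] {m : ℕ}

def extLast (σ : Equiv.Perm (Fin m)) : Equiv.Perm (Fin (m+1)) :=
  finSuccEquivLast.symm.permCongr σ.optionCongr

@[simp] lemma extLast_castSucc (σ : Equiv.Perm (Fin m)) (t : Fin m) :
    extLast σ t.castSucc = (σ t).castSucc := by
  simp [extLast, Equiv.permCongr_apply]

@[simp] lemma extLast_last (σ : Equiv.Perm (Fin m)) :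
    extLast σ (Fin.last m) = Fin.last m := by
  simp [extLast, Equiv.permCongr_apply]

lemma extLast_eq_last_iff (σ : Equiv.Perm (Fin m)) (x : Fin (m+1)) :
    extLast σ x = Fin.last m ↔ x = Fin.last m := by
  constructor
  · intro h
    by_contra hx
    obtain ⟨t, rfl⟩ := Fin.exists_castSucc_eq.mpr hx
    rw [extLast_castSucc] at h
    exact (Fin.castSucc_lt_last (σ t)).ne h
  · rintro rfl; exact extLast_last σ

lemma extLast_injective : Function.Injective (extLast (m := m)) := by
  intro a b h
  apply Equiv.ext; intro t
  apply Fin.castSucc_injective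
  rw [← extLast_castSucc a t, ← extLast_castSucc b t, h]

def Psi (y : Fin r × ((Fin m → Fin r) × Equiv.Perm (Fin m)) × Fin (m+1)) :
    (Fin (m+1) → Fin r) × Equiv.Perm (Fin (m+1)) :=
  (fun q => (Fin.snoc y.2.1.1 y.1 : Fin (m+1) → Fin r) (Equiv.swap y.2.2 (Fin.last m) q),
   extLast y.2.1.2 * Equiv.swap y.2.2 (Fin.last m))

lemma Psi_injective : Function.Injective (Psi (r := r) (m := m)) := by
  rintro ⟨j₁, x₁, p₁⟩ ⟨j₂, x₂, p₂⟩ h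
  have h1 := congrArg Prod.fst h
  have h2 := congrArg Prod.snd h
  simp only [Psi] at h1 h2
  have hp : p₁ = p₂ := by
    have e1 : (extLast x₁.2 * Equiv.swap p₁ (Fin.last m)) p₁ = Fin.last m := by
      simp [Equiv.Perm.mul_apply]
    rw [h2] at e1
    simp only [Equiv.Perm.mul_apply] at e1
    have := (extLast_eq_last_iff x₂.2 _).mp e1
    have := congrArg (Equiv.swap p₂ (Fin.last m)) this
    simpa [Equiv.swap_apply_self] using this
  subst hp
  have hσ : x₁.2 = x₂.2 := extLast_injective (mul_right_cancel h2)
  have hsnoc : (Fin.snoc x₁.1 j₁ : Fin (m+1) → Fin r) = (Fin.snoc x₂.1 j₂ : Fin (m+1) → Fin r) := by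
    funext q
    have := congrFun h1 (Equiv.swap p₁ (Fin.last m) q)
    simpa [Equiv.swap_apply_self] using this
  have hj : j₁ = j₂ := by
    have := congrFun hsnoc (Fin.last m)
    simpa using this
  have hc : x₁.1 = x₂.1 := by
    funext t
    have := congrFun hsnoc t.castSucc
    simpa using this
  simp [hj, Prod.ext_iff, hc, hσ]

lemma Psi_bijective : Function.Bijective (Psi (r := r) (m := m)) := by
  rw [Fintype.bijective_iff_injective_and_card]
  refine ⟨Psi_injective, ?_⟩
  simp only [Fintype.card_prod, Fintype.card_perm, Fintype.card_fun, Fintype.card_fin]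
  rw [pow_succ, Nat.factorial_succ]
  ring

end Aux2

section Aux3
variable {r : ℕ} [NeZero r] {m : ℕ}

lemma pExc_le {n : ℕ} (x : (Fin n → Fin r) × Equiv.Perm (Fin n)) : pExc x ≤ n :=
  le_trans (Finset.card_filter_le _ _) (by simp)

lemma pExc_cast {n : ℕ} (x : (Fin n → Fin r) × Equiv.Perm (Fin n)) :
    (pExc x : ℤ) = ∑ q, if (x.1 q = 0 ∧ q.val < (x.2 q).val) then (1:ℤ) else 0 := by
  rw [pExc, Finset.card_filter, Nat.cast_sum]
  simp

lemma pSum_Psi (y : Fin r × ((Fin m → Fin r) × Equiv.Perm (Fin m)) × Fin (m+1)) :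
    pSum (Psi y) = y.1.val + pSum y.2.1 := by
  obtain ⟨j, x', p⟩ := y
  unfold pSum Psi
  simp only
  rw [Equiv.sum_comp (Equiv.swap p (Fin.last m))
    (fun q => ((Fin.snoc x'.1 j : Fin (m+1) → Fin r) q).val)]
  rw [Fin.sum_univ_castSucc]
  simp [add_comm]

lemma pExc_Psi (j : Fin r) (x' : (Fin m → Fin r) × Equiv.Perm (Fin m)) (p : Fin (m+1)) :
    (pExc (Psi (j, x', p)) : ℤ) =
      (∑ t : Fin m, if t.castSucc = p then 0 else
        (if (x'.1 t = 0 ∧ t.val < (x'.2 t).val) then (1:ℤ) else 0))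
      + (if (j = 0 ∧ p.val < m) then 1 else 0) := by
  rw [pExc_cast]
  rw [← Equiv.sum_comp (Equiv.swap p (Fin.last m))
    (fun q => if ((Psi (j, x', p)).1 q = 0 ∧ q.val < (((Psi (j, x', p)).2) q).val)
      then (1:ℤ) else 0)]
  have hfst : ∀ q, (Psi (j, x', p)).1 (Equiv.swap p (Fin.last m) q)
      = (Fin.snoc x'.1 j : Fin (m+1) → Fin r) q := by
    intro q; simp [Psi, Equiv.swap_apply_self]
  have hsnd : ∀ q, (Psi (j, x', p)).2 (Equiv.swap p (Fin.last m) q) = extLast x'.2 q := by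
    intro q; simp [Psi, Equiv.Perm.mul_apply, Equiv.swap_apply_self]
  simp only [hfst, hsnd]
  rw [Fin.sum_univ_castSucc]
  congr 1
  · refine Finset.sum_congr rfl fun t _ => ?_
    by_cases h : t.castSucc = p
    · rw [if_pos h, ← h, Equiv.swap_apply_left]
      have hlt := (x'.2 t).isLt
      simp only [Fin.snoc_castSucc, extLast_castSucc, Fin.val_last, Fin.coe_castSucc,
        ite_eq_right_iff]
      rintro ⟨-, h2⟩
      omega
    · rw [if_neg h]
      rw [Equiv.swap_apply_of_ne_of_ne h (Fin.castSucc_lt_last t).ne]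
      simp
  · have h1 : (Equiv.swap p (Fin.last m)) (Fin.last m) = p := Equiv.swap_apply_right _ _
    rw [h1]
    simp only [Fin.snoc_last, extLast_last, Fin.val_last]


lemma count_helper (E : ℕ) (c : Fin m → Prop) [DecidablePred c]
    (hc : (univ.filter c).card = E) (a b : ℤ) :
    ∑ u : Fin m, (if c u then a else b) = a * E + b * ((m : ℤ) - E) := by
  rw [Finset.sum_ite]
  have h2 : (univ.filter (fun x => ¬ c x)).card = m - E := by
    have := Finset.card_filter_add_card_filter_not (s := (univ : Finset (Fin m)))
      (p := c)
    simp only [Finset.card_univ, Fintype.card_fin] at this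
    omega
  have hEm : E ≤ m := by
    rw [← hc]
    exact le_trans (Finset.card_filter_le _ _) (by simp)
  rw [Finset.sum_const, Finset.sum_const, hc, h2]
  simp only [nsmul_eq_mul]
  rw [Nat.cast_sub hEm]
  ring

lemma castSucc_ne_last' (t : Fin m) : (t.castSucc = Fin.last m) = False :=
  eq_false (Fin.castSucc_lt_last t).ne

lemma sum_D_last :
    ∀ (f : Fin m → ℤ), (∑ t : Fin m, if t.castSucc = Fin.last m then 0 else f t)
      = ∑ t : Fin m, f t := by
  intro f
  refine Finset.sum_congr rfl fun t _ => ?_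
  rw [if_neg (Fin.castSucc_lt_last t).ne]

lemma sum_D_castSucc (f : Fin m → ℤ) (u : Fin m) :
    (∑ t : Fin m, if t.castSucc = u.castSucc then 0 else f t)
      = (∑ t : Fin m, f t) - f u := by
  have h : ∀ t : Fin m, (if t.castSucc = u.castSucc then (0:ℤ) else f t)
      = f t - (if t = u then f t else 0) := by
    intro t
    by_cases h : t = u
    · simp [h]
    · rw [if_neg (by simpa [Fin.castSucc_inj] using h), if_neg h, sub_zero]
  rw [Finset.sum_congr rfl (fun t _ => h t), Finset.sum_sub_distrib,
    Finset.sum_ite_eq' univ u f, if_pos (Finset.mem_univ u)]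

lemma sum_p (j : Fin r) (x' : (Fin m → Fin r) × Equiv.Perm (Fin m)) (i k : ℤ) :
    (∑ p : Fin (m+1), if ((pExc (Psi (j, x', p)) : ℤ) = k ∧ (pSum (Psi (j, x', p)) : ℤ) = i)
        then (1:ℤ) else 0) =
      if j = 0 then
        ((if ((pExc x' : ℤ) = k ∧ (pSum x' : ℤ) = i) then k+1 else 0) +
         (if ((pExc x' : ℤ) = k - 1 ∧ (pSum x' : ℤ) = i) then (m+1 : ℤ) - k else 0))
      else
        ((if ((pExc x' : ℤ) = k ∧ (pSum x' : ℤ) = i - j.val) then (m+1 : ℤ) - k else 0) +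
         (if ((pExc x' : ℤ) = k + 1 ∧ (pSum x' : ℤ) = i - j.val) then k+1 else 0)) := by
  have hEm : (pExc x' : ℤ) ≤ m := by
    have := pExc_le x'; exact_mod_cast this
  have hE0 : (0:ℤ) ≤ (pExc x' : ℤ) := Int.natCast_nonneg _
  simp only [pExc_Psi, pSum_Psi, Nat.cast_add]
  rw [Fin.sum_univ_castSucc]
  -- last term
  rw [sum_D_last]
  rw [← pExc_cast]
  have hlast : (if (j = 0 ∧ (Fin.last m).val < m) then (1:ℤ) else 0) = 0 := by
    rw [if_neg]; rintro ⟨-, h⟩; simp at h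
  rw [hlast, add_zero]
  -- castSucc terms
  have hterm : ∀ u : Fin m,
      (if ((∑ t : Fin m, if t.castSucc = u.castSucc then 0 else
          (if (x'.1 t = 0 ∧ t.val < (x'.2 t).val) then (1:ℤ) else 0))
          + (if (j = 0 ∧ (u.castSucc).val < m) then (1:ℤ) else 0) = k
          ∧ ((j.val : ℤ) + pSum x' = i)) then (1:ℤ) else 0)
      = if (x'.1 u = 0 ∧ u.val < (x'.2 u).val) then
          (if (((pExc x' : ℤ) - 1 + (if j = 0 then (1:ℤ) else 0) = k)
            ∧ ((j.val : ℤ) + pSum x' = i)) then (1:ℤ) else 0)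
        else
          (if (((pExc x' : ℤ) + (if j = 0 then (1:ℤ) else 0) = k)
            ∧ ((j.val : ℤ) + pSum x' = i)) then (1:ℤ) else 0) := by
    intro u
    rw [sum_D_castSucc, ← pExc_cast]
    have hj' : (if (j = 0 ∧ (u.castSucc).val < m) then (1:ℤ) else 0)
        = (if j = 0 then 1 else 0) := by
      simp [u.isLt]
    rw [hj']
    simp only [Fin.val_fin_lt]
    by_cases hc : (x'.1 u = 0 ∧ u < x'.2 u)
    · simp [hc]
    · simp [hc]
  rw [Finset.sum_congr rfl (fun u _ => hterm u)]
  rw [count_helper (pExc x') _ rfl]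
  by_cases hj : j = 0
  · simp only [hj, Fin.val_zero, Nat.cast_zero, zero_add, if_true, eq_self_iff_true, ite_true]
    split_ifs <;> omega
  · simp only [hj, if_false]
    split_ifs <;> omega

end Aux3

section Aux4
variable {r : ℕ} [NeZero r] {m : ℕ}

lemma cG_cast_sum (n : ℕ) (i k : ℤ) :
    (cG r n i k : ℤ) = ∑ x : (Fin n → Fin r) × Equiv.Perm (Fin n),
      (if ((pExc x : ℤ) = k ∧ (pSum x : ℤ) = i) then (1:ℤ) else 0) := by
  rw [cG_eq_card, Finset.card_filter, Nat.cast_sum]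
  simp

lemma sum_ite_cG (n : ℕ) (i k : ℤ) (c : ℤ) :
    (∑ x : (Fin n → Fin r) × Equiv.Perm (Fin n),
      (if ((pExc x : ℤ) = k ∧ (pSum x : ℤ) = i) then c else 0))
      = c * cG r n i k := by
  rw [cG_cast_sum, Finset.mul_sum]
  refine Finset.sum_congr rfl fun x _ => ?_
  rw [mul_ite, mul_one, mul_zero]

lemma sum_ite_const {α : Type*} [Fintype α] (c : Prop) [Decidable c] (f g : α → ℤ) :
    ∑ x : α, (if c then f x else g x) = if c then ∑ x : α, f x else ∑ x : α, g x := by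
  split_ifs <;> rfl

lemma fin_sum_split (f0 : ℤ) (g : ℕ → ℤ) :
    (∑ j : Fin r, if j = 0 then f0 else g j.val)
      = f0 + ∑ t ∈ Finset.Icc 1 (r - 1), g t := by
  have hr : 1 ≤ r := Nat.one_le_iff_ne_zero.mpr (NeZero.ne r)
  have h2 : Finset.range r = insert 0 (Finset.Icc 1 (r-1)) := by
    ext t
    simp only [Finset.mem_range, Finset.mem_insert, Finset.mem_Icc]
    omega
  calc (∑ j : Fin r, if j = 0 then f0 else g j.val)
      = ∑ j : Fin r, (if (j : ℕ) = 0 then f0 else g (j : ℕ)) := by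
        refine Finset.sum_congr rfl fun j _ => ?_
        by_cases h : j = 0
        · simp [h]
        · rw [if_neg h, if_neg (fun hv => h (Fin.ext (by simpa using hv)))]
    _ = ∑ t ∈ Finset.range r, (if t = 0 then f0 else g t) :=
        Fin.sum_univ_eq_sum_range (fun t => if t = 0 then f0 else g t) r
    _ = f0 + ∑ t ∈ Finset.Icc 1 (r-1), g t := by
        rw [h2, Finset.sum_insert (by simp), if_pos rfl]
        congr 1
        refine Finset.sum_congr rfl fun t ht => ?_
        rw [if_neg (by simp only [Finset.mem_Icc] at ht; omega)]

end Aux4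


/-- The recursion
`c_i(r,n,k) = (n−k)·c_i(r,n−1,k−1) + (k+1)·c_i(r,n−1,k)
  + Σ_{j=1}^{r−1} [(n−k)·c_{i−j}(r,n−1,k) + (k+1)·c_{i−j}(r,n−1,k+1)]`. -/
theorem cG_recursion (r n : ℕ) [NeZero r] (hn : 1 ≤ n) (i k : ℤ) :
    (cG r n i k : ℤ) =
      ((n : ℤ) - k) * cG r (n - 1) i (k - 1) + (k + 1) * cG r (n - 1) i k +
        ∑ j ∈ Finset.Icc 1 (r - 1),
          (((n : ℤ) - k) * cG r (n - 1) (i - (j : ℤ)) k +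
            (k + 1) * cG r (n - 1) (i - (j : ℤ)) (k + 1)) := by
  obtain ⟨m, rfl⟩ : ∃ m, n = m + 1 := ⟨n - 1, by omega⟩
  simp only [Nat.add_sub_cancel]
  rw [cG_cast_sum]
  rw [← Function.Bijective.sum_comp Psi_bijective
    (fun x => if ((pExc x : ℤ) = k ∧ (pSum x : ℤ) = i) then (1:ℤ) else 0)]
  rw [Fintype.sum_prod_type]
  have step1 : ∀ j : Fin r,
      (∑ z : ((Fin m → Fin r) × Equiv.Perm (Fin m)) × Fin (m+1),
        (if ((pExc (Psi (j, z)) : ℤ) = k ∧ (pSum (Psi (j, z)) : ℤ) = i) then (1:ℤ) else 0))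
      = if j = 0 then
          ((k+1) * cG r m i k + ((m+1:ℤ) - k) * cG r m i (k-1))
        else
          (((m+1:ℤ) - k) * cG r m (i - (j.val : ℤ)) k
            + (k+1) * cG r m (i - (j.val : ℤ)) (k+1)) := by
    intro j
    rw [Fintype.sum_prod_type]
    rw [Finset.sum_congr rfl (fun x' _ => sum_p j x' i k)]
    rw [sum_ite_const]
    congr 1
    · rw [Finset.sum_add_distrib, sum_ite_cG, sum_ite_cG]
    · rw [Finset.sum_add_distrib, sum_ite_cG, sum_ite_cG]
  rw [Finset.sum_congr rfl (fun j _ => step1 j)]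
  rw [fin_sum_split ((k+1) * cG r m i k + ((m+1:ℤ) - k) * cG r m i (k-1))
    (fun t => ((m+1:ℤ) - k) * cG r m (i - (t : ℤ)) k
      + (k+1) * cG r m (i - (t : ℤ)) (k+1))]
  push_cast
  ring
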